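/- Suppose S ⊆ Fin N is a uniqueness set for W, i.e. the only f ∈ W with f(u) = 0 for every u ∈ S is f = 0. Then the family {P δ_u}_{u ∈ S} is a frame in W with upper frame bound 1: there exists a constant A > 0 such that for every f ∈ W, A‖f‖² ≤ Σ_{u ∈ S} ⟨f, P δ_u⟩² ≤ ‖f‖². (Equivalently, since ⟨f, P δ_u⟩ = f(u) for f ∈ W: A‖f‖² ≤ Σ_{u ∈ S} f(u)² ≤ ‖f‖².) -/

import Mathlib

open scoped RealInnerProductSpace BigOperators

/-- If `S` is a uniqueness set for the bandlimited subspace `W`, then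
`{P δ_u}_{u ∈ S}` is a frame in `W` with upper frame bound `1`. -/
theorem uniqueness_set_gives_frame
    {N : ℕ} (W : Submodule ℝ (EuclideanSpace ℝ (Fin N)))
    (S : Finset (Fin N))
    (hU : ∀ f ∈ W, (∀ u ∈ S, f u = 0) → f = 0) :
    ∃ A > (0 : ℝ), ∀ f ∈ W,
      A * ‖f‖ ^ 2 ≤
        ∑ u ∈ S, ⟪f, ((Submodule.orthogonalProjectionOnto W (EuclideanSpace.single u (1 : ℝ)) :
          EuclideanSpace ℝ (Fin N)))⟫ ^ 2 ∧
      ∑ u ∈ S, ⟪f, ((Submodule.orthogonalProjectionOnto W (EuclideanSpace.single u (1 : ℝ)) :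
          EuclideanSpace ℝ (Fin N)))⟫ ^ 2 ≤ ‖f‖ ^ 2 := by
  classical
  have key : ∀ f ∈ W, ∀ u : Fin N,
      ⟪f, ((Submodule.orthogonalProjectionOnto W (EuclideanSpace.single u (1:ℝ)) :
        EuclideanSpace ℝ (Fin N)))⟫ = f u := by
    intro f hf u
    rw [Submodule.coe_orthogonalProjectionOnto_apply,
      ← Submodule.inner_starProjection_left_eq_right W,
      Submodule.starProjection_eq_self_iff.2 hf]
    simp [EuclideanSpace.inner_single_right]
  have normsq : ∀ f : EuclideanSpace ℝ (Fin N), ‖f‖^2 = ∑ u, (f u)^2 := by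
    intro f
    rw [← real_inner_self_eq_norm_sq]
    rw [PiLp.inner_apply]
    simp [pow_two]
  have upper : ∀ f : EuclideanSpace ℝ (Fin N), ∑ u ∈ S, (f u)^2 ≤ ‖f‖^2 := by
    intro f
    rw [normsq]
    exact Finset.sum_le_sum_of_subset_of_nonneg (Finset.subset_univ S)
      (fun i _ _ => sq_nonneg _)
  -- the quadratic form
  set Q : W → ℝ := fun x => ∑ u ∈ S, (((x : EuclideanSpace ℝ (Fin N))) u)^2 with hQ
  have hQcont : Continuous Q := by
    apply continuous_finset_sum
    intro u _
    exact (((EuclideanSpace.proj u).continuous).comp continuous_subtype_val).pow 2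
  by_cases hbot : W = ⊥
  · refine ⟨1, one_pos, fun f hf => ?_⟩
    have : f = 0 := by
      subst hbot; simpa using hf
    subst this
    simp
  · -- sphere in W is nonempty and compact
    obtain ⟨x, hxW, hx0⟩ := Submodule.exists_mem_ne_zero_of_ne_bot hbot
    have hsph : (Metric.sphere (0 : W) 1).Nonempty := by
      refine ⟨‖(⟨x, hxW⟩ : W)‖⁻¹ • ⟨x, hxW⟩, ?_⟩
      have hx0' : (⟨x, hxW⟩ : W) ≠ 0 := by
        simp [Submodule.mk_eq_zero, hx0]
      have hn : ‖(⟨x, hxW⟩ : W)‖ ≠ 0 := norm_ne_zero_iff.2 hx0'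
      simp only [mem_sphere_iff_norm, sub_zero, norm_smul, norm_inv, norm_norm]
      exact inv_mul_cancel₀ hn
    obtain ⟨x₀, hx₀mem, hx₀min⟩ :=
      (isCompact_sphere (0 : W) 1).exists_isMinOn hsph hQcont.continuousOn
    have hx₀norm : ‖x₀‖ = 1 := by simpa using hx₀mem
    have hApos : 0 < Q x₀ := by
      rcases lt_or_eq_of_le (Finset.sum_nonneg (fun u _ => sq_nonneg
        (((x₀ : EuclideanSpace ℝ (Fin N))) u))) with h | h
      · exact h
      · exfalso
        have hz : ∀ u ∈ S, ((x₀ : EuclideanSpace ℝ (Fin N))) u = 0 := by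
          intro u hu
          have := (Finset.sum_eq_zero_iff_of_nonneg
            (fun u _ => sq_nonneg (((x₀ : EuclideanSpace ℝ (Fin N))) u))).1 h.symm u hu
          exact pow_eq_zero_iff (by norm_num) |>.1 this
        have := hU _ x₀.2 hz
        have : x₀ = 0 := Subtype.ext this
        rw [this] at hx₀norm
        simp at hx₀norm
    refine ⟨Q x₀, hApos, fun f hf => ?_⟩
    have hsum : ∀ u : Fin N,
        ⟪f, ((Submodule.orthogonalProjectionOnto W (EuclideanSpace.single u (1:ℝ)) :
          EuclideanSpace ℝ (Fin N)))⟫ = f u := key f hf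
    have hrw : (∑ u ∈ S, ⟪f, ((Submodule.orthogonalProjectionOnto W (EuclideanSpace.single u (1:ℝ)) :
          EuclideanSpace ℝ (Fin N)))⟫ ^ 2) = ∑ u ∈ S, (f u)^2 := by
      refine Finset.sum_congr rfl fun u _ => by rw [hsum u]
    rw [hrw]
    refine ⟨?_, upper f⟩
    by_cases hf0 : f = 0
    · subst hf0; simp
    · have hfW : (⟨f, hf⟩ : W) ≠ 0 := by simp [Submodule.mk_eq_zero, hf0]
      have hn : (0:ℝ) < ‖f‖ := norm_pos_iff.2 hf0
      set y : W := ‖f‖⁻¹ • ⟨f, hf⟩ with hy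
      have hymem : y ∈ Metric.sphere (0 : W) 1 := by
        have : ‖(⟨f, hf⟩ : W)‖ = ‖f‖ := rfl
        simp [hy, norm_smul, abs_of_nonneg (inv_nonneg.2 (norm_nonneg _)), this,
          inv_mul_cancel₀ hn.ne']
      have hmin := hx₀min hymem
      have hQy : Q y = ‖f‖⁻¹^2 * ∑ u ∈ S, (f u)^2 := by
        simp only [hQ, hy, Finset.mul_sum]
        refine Finset.sum_congr rfl fun u _ => ?_
        have : ((( ‖f‖⁻¹ • (⟨f, hf⟩ : W) : W) : EuclideanSpace ℝ (Fin N))) u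
            = ‖f‖⁻¹ * f u := rfl
        rw [this]; ring
      have : Q x₀ ≤ ‖f‖⁻¹^2 * ∑ u ∈ S, (f u)^2 := by
        rw [← hQy]; exact hmin
      have h2 : Q x₀ * ‖f‖^2 ≤ ∑ u ∈ S, (f u)^2 := by
        have := mul_le_mul_of_nonneg_right this (le_of_lt (pow_pos hn 2))
        calc Q x₀ * ‖f‖^2 ≤ ‖f‖⁻¹^2 * (∑ u ∈ S, (f u)^2) * ‖f‖^2 := this
          _ = ∑ u ∈ S, (f u)^2 := by
              field_simp
      exact h2
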